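/- Consider a tower of fields K ⊆ E ⊆ E' where K is infinite and E'/E is an extension of algebraically closed fields with transcendence basis {α} (a single element). Suppose R is a subring of E' that is finitely generated as an E-algebra. Then there exists an E-rational place P of E' such that P(α) and P(α^{-1}) lie in K and P is finite on R (i.e. P maps every element of R into E, not to ∞). -/

import Mathlib

noncomputable section

open HahnSeries Classical

/-- A field is real closed: `-1` is not a square, every element or its negative is a square,
and every polynomial of odd degree has a root. -/
def IsRealClosedField (F : Type*) [Field F] : Prop :=
  (¬ ∃ x : F, x ^ 2 = -1) ∧ (∀ x : F, ∃ y : F, y ^ 2 = x ∨ y ^ 2 = -x) ∧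
    ∀ p : Polynomial F, Odd p.natDegree → ∃ x : F, p.eval x = 0

/-- Applying a map `p : F → F'` (e.g. the residue map of a place) to each coefficient
of a generalized power series; coefficients equal to `0` are sent to `0`. -/
def coeffMap {G : Type*} [PartialOrder G] {F F' : Type*} [Zero F] [Zero F']
    (p : F → F') (f : HahnSeries G F) : HahnSeries G F' where
  coeff g := if f.coeff g = 0 then 0 else p (f.coeff g)
  isPWO_support' := f.isPWO_support'.mono (fun g hg h => by
    simp only [Function.mem_support, h, if_pos] at hg
    exact hg rfl)

variable (F : Type*) [Field F] (G : Type*) [AddCommGroup G] [LinearOrder G] [IsOrderedAddMonoid G]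

/-- The minimal support valuation on the field of generalized power series `F((G))`,
with value `⊤` at `0`. -/
def vmin (f : HahnSeries G F) : WithTop G := f.orderTop

/-- The set of generalized power series all of whose coefficients lie in `S`. -/
def coeffIn (S : Set F) : Set (HahnSeries G F) := {f | ∀ g : G, f.coeff g ∈ S}

/-- For a subfield `E ⊆ F`, the subfield `E(G)` of `F((G))`: the fraction field of the
group ring `E[G]`, i.e. the subfield generated by the monomials with coefficients in `E`. -/
def ratSubfieldOver (E : Subfield F) : Subfield (HahnSeries G F) :=
  Subfield.closure {x | ∃ (g : G) (a : F), a ∈ E ∧ x = HahnSeries.single g a}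

/-- The subfield `F(G)` of rational functions inside `F((G))`. -/
def ratSubfield : Subfield (HahnSeries G F) := ratSubfieldOver F G ⊤

/-- The valuation ideal `I_L` of a subset `L ⊆ F((G))` (w.r.t. the minimal support
valuation). -/
def valIdeal (L : Set (HahnSeries G F)) : Set (HahnSeries G F) :=
  {f ∈ L | 0 < vmin F G f}

/-- The set `U_L = 1 + I_L` of 1-units of a subset `L ⊆ F((G))`. -/
def oneUnits (L : Set (HahnSeries G F)) : Set (HahnSeries G F) :=
  {f ∈ L | 0 < vmin F G (1 - f)}

variable {F G} in
/-- The `K`-linear combination of elements of `F((G))` encoded by a finitely supported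
function `c` with values in the subfield `K`. -/
def lincomb {K : Subfield F} (c : HahnSeries G F →₀ K) : HahnSeries G F :=
  c.sum fun b r => (r : F) • b

/-- `B` is a `K`-valuation basis of the (`K`-subspace) subset `L` of `F((G))`:
it is contained in `L`, every element of `L` is a unique finite `K`-linear combination
of elements of `B`, and every such combination realizes as its value the minimum of the
values of the basis elements occurring in it. -/
def IsValuationBasis (K : Subfield F) (L B : Set (HahnSeries G F)) : Prop :=
  B ⊆ L ∧
    (∀ f ∈ L, ∃! c : HahnSeries G F →₀ K, ↑c.support ⊆ B ∧ f = lincomb c) ∧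
    ∀ c : HahnSeries G F →₀ K, ↑c.support ⊆ B →
      vmin F G (lincomb c) = c.support.inf fun b => vmin F G b

/-- `f = ∏ b^(c b)` where the exponents `c b` are rational numbers: there is a common
positive denominator `d` such that `f ^ d = ∏ b ^ (c b * d)` with integer exponents. -/
def qpowCombo (c : HahnSeries G F →₀ ℚ) (f : HahnSeries G F) : Prop :=
  ∃ d : ℕ, 0 < d ∧ (∀ b ∈ c.support, ((c b) * d).den = 1) ∧
    f ^ d = ∏ b ∈ c.support, b ^ ((c b) * d).num

/-- `B` is a `ℚ`-valuation basis of a subset `L` of the group of `1`-units of `F((G))`,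
with respect to the valuation `w f = v_min (1 - f)`, all operations being multiplicative. -/
def IsMultValuationBasis (L B : Set (HahnSeries G F)) : Prop :=
  B ⊆ L ∧
    (∀ f ∈ L, ∃! c : HahnSeries G F →₀ ℚ, ↑c.support ⊆ B ∧ qpowCombo F G c f) ∧
    ∀ c : HahnSeries G F →₀ ℚ, ↑c.support ⊆ B → ∀ f, qpowCombo F G c f →
      vmin F G (1 - f) = c.support.inf fun b => vmin F G (1 - b)

variable {F} in
/-- An `E`-rational place of `E'` (both subsets of an ambient field `F`): a valuation
subring `dom` of `E'` containing `E`, together with a residue map `res` which is a ring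
homomorphism on `dom`, restricts to the identity on `E`, has image in `E` (so the residue
field is `E`), and whose kernel consists exactly of the nonunits of `dom`. -/
structure RatPlace (E E' : Set F) where
  dom : Subring F
  dom_le : (dom : Set F) ⊆ E'
  res : F → F
  res_one : res 1 = 1
  res_add : ∀ x ∈ dom, ∀ y ∈ dom, res (x + y) = res x + res y
  res_mul : ∀ x ∈ dom, ∀ y ∈ dom, res (x * y) = res x * res y
  res_mem : ∀ x ∈ dom, res x ∈ E
  base_subset : E ⊆ dom
  res_id : ∀ x ∈ E, res x = x
  vring : ∀ x ∈ E', x ∉ dom → x⁻¹ ∈ dom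
  res_unit : ∀ x ∈ dom, res x ≠ 0 → x⁻¹ ∈ dom
  res_nonunit : ∀ x ∈ dom, x ≠ 0 → x⁻¹ ∈ dom → res x ≠ 0

variable {F} in
/-- `{α}` is a transcendence basis of `E'` over `E` (inside the ambient field `F`):
`α ∈ E'` is transcendental over `E` and every element of `E'` is algebraic over `E(α)`. -/
def IsSingleTransBasis (E E' : Subfield F) (α : F) : Prop :=
  α ∈ E' ∧ Transcendental E α ∧
    ∀ x ∈ E', IsAlgebraic (Subfield.closure ((E : Set F) ∪ {α})) x

/-- The transcendence degree reduction property over `K` (for `F` algebraically closed)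
of a subset `L` with `F(G) ⊆ L ⊆ F((G))`:
1. for each countable intermediate field `K ≤ E`, `E((G)) ∩ L` is countable and `L` is
   the union of these sets;
2. for intermediate algebraically closed fields `K ≤ E < E'` with `E'/E` of transcendence
   degree 1, any finitely many elements of `E'((G)) ∩ L` have all coefficients in the
   valuation ring of some `E`-rational place `P` of `E'`, with images under `φ_P` in
   `E((G)) ∩ L`;
3. moreover, for any fixed transcendence basis `{α}` of `E'/E`, the place `P` may be
   chosen to send `α` and `α⁻¹` into `K`. -/
def SatisfiesTDRPAC (K : Subfield F) (L : Set (HahnSeries G F)) : Prop :=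
  (∀ E : Subfield F, K ≤ E → (E : Set F).Countable →
      (coeffIn F G ↑E ∩ L).Countable) ∧
  (∀ f ∈ L, ∃ E : Subfield F, K ≤ E ∧ (E : Set F).Countable ∧ f ∈ coeffIn F G ↑E) ∧
  (∀ E E' : Subfield F, K ≤ E → E < E' → IsAlgClosed E → IsAlgClosed E' →
      (∃ α : F, IsSingleTransBasis E E' α) →
      ∀ (n : ℕ) (s : Fin n → HahnSeries G F),
        (∀ m, s m ∈ coeffIn F G ↑E' ∩ L) →
        ∃ P : RatPlace (E : Set F) (E' : Set F),
          (∀ m, s m ∈ coeffIn F G ↑P.dom) ∧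
          ∀ m, coeffMap P.res (s m) ∈ coeffIn F G ↑E ∩ L) ∧
  (∀ E E' : Subfield F, K ≤ E → E < E' → IsAlgClosed E → IsAlgClosed E' →
      ∀ α : F, IsSingleTransBasis E E' α →
      ∀ (n : ℕ) (s : Fin n → HahnSeries G F),
        (∀ m, s m ∈ coeffIn F G ↑E' ∩ L) →
        ∃ P : RatPlace (E : Set F) (E' : Set F),
          (∀ m, s m ∈ coeffIn F G ↑P.dom) ∧
          (∀ m, coeffMap P.res (s m) ∈ coeffIn F G ↑E ∩ L) ∧
          α ∈ P.dom ∧ α⁻¹ ∈ P.dom ∧ P.res α ∈ K ∧ P.res α⁻¹ ∈ K)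

variable {F} in
/-- The set `L ⊕ √-1·L` inside `F'((G))`, where `φ : F →+* F'` identifies `F` with a
subfield of `F'` and `i ∈ F'` is a square root of `-1`. -/
def complexifySet {F' : Type*} [Field F'] (φ : F →+* F') (i : F')
    (L : Set (HahnSeries G F)) : Set (HahnSeries G F') :=
  {z | ∃ x ∈ L, ∃ y ∈ L,
    z = coeffMap (⇑φ) x + HahnSeries.single (0 : G) i * coeffMap (⇑φ) y}

/-- The transcendence degree reduction property over `K` of `L ⊆ F((G))`, for `F`
algebraically closed or real closed.  In the real closed case it is the requirement that
`L ⊕ √-1·L`, viewed inside `F^a((G))` where `F^a = F(√-1)` is the algebraic closure of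
`F`, satisfies the TDRP over (the image of) `K`. -/
def SatisfiesTDRP (K : Subfield F) (L : Set (HahnSeries G F)) : Prop :=
  (IsAlgClosed F ∧ SatisfiesTDRPAC F G K L) ∨
  (IsRealClosedField F ∧ ∃ i : AlgebraicClosure F, i ^ 2 = -1 ∧
    SatisfiesTDRPAC (AlgebraicClosure F) G
      (K.map (algebraMap F (AlgebraicClosure F)))
      (complexifySet G (algebraMap F (AlgebraicClosure F)) i L))

/-- A transcendence basis `{α_λ}_{λ ∈ I}` of `F` over a subfield `K`: the family is
algebraically independent over `K` and `F` is algebraic over the subfield generated by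
`K` and the `α_λ`. -/
def IsTransBasisFamily {F : Type*} [Field F] (K : Subfield F) {I : Type*} (α : I → F) :
    Prop :=
  AlgebraicIndependent K α ∧
    ∀ x : F, IsAlgebraic (Subfield.closure ((K : Set F) ∪ Set.range α)) x

/-- For a subset `S ⊆ I`, the field `K_S`: the relative algebraic closure in `F` of the
subfield generated by `K` and the transcendence basis elements `α_λ`, `λ ∈ S`. -/
def KXset {F : Type*} [Field F] (K : Subfield F) {I : Type*} (α : I → F) (S : Set I) :
    Set F :=
  {x | IsAlgebraic (Subfield.closure ((K : Set F) ∪ α '' S)) x}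


namespace ERP

open Polynomial

variable {E' : Type*} [Field E']

/-! ### The maximal ideal of a valuation subring, as a set -/

/-- The set of elements of the maximal ideal of a valuation subring. -/
def mset (B : ValuationSubring E') : Set E' := {y | ∃ h : y ∈ B, ¬ IsUnit (⟨y, h⟩ : B)}

variable {B : ValuationSubring E'}

theorem mset_memB {y : E'} (h : y ∈ mset B) : y ∈ B := h.1

theorem mem_mset {y : E'} (hy : y ∈ B) (h : ¬ IsUnit (⟨y, hy⟩ : B)) : y ∈ mset B :=
  ⟨hy, h⟩

theorem mset_max {y : E'} (hy : y ∈ B) :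
    y ∈ mset B ↔ (⟨y, hy⟩ : B) ∈ IsLocalRing.maximalIdeal B := by
  constructor
  · rintro ⟨h, hu⟩; exact hu
  · intro h; exact ⟨hy, h⟩

theorem zero_mem_mset : (0 : E') ∈ mset B := by
  refine ⟨zero_mem B, ?_⟩
  have : (⟨0, zero_mem B⟩ : B) = 0 := rfl
  rw [this]
  exact not_isUnit_zero

theorem one_not_mem_mset : (1 : E') ∉ mset B := by
  rintro ⟨h, hu⟩
  have : (⟨1, h⟩ : B) = 1 := rfl
  rw [this] at hu
  exact hu isUnit_one

theorem mset_add {y z : E'} (hy : y ∈ mset B) (hz : z ∈ mset B) : y + z ∈ mset B := by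
  have : (⟨y + z, add_mem hy.1 hz.1⟩ : B) ∈ IsLocalRing.maximalIdeal B := by
    have : (⟨y + z, add_mem hy.1 hz.1⟩ : B) = ⟨y, hy.1⟩ + ⟨z, hz.1⟩ := rfl
    rw [this]
    exact Ideal.add_mem _ ((mset_max hy.1).mp hy) ((mset_max hz.1).mp hz)
  exact (mset_max _).mpr this

theorem mset_neg {y : E'} (hy : y ∈ mset B) : -y ∈ mset B := by
  have : (⟨-y, neg_mem hy.1⟩ : B) = -⟨y, hy.1⟩ := rfl
  exact (mset_max (neg_mem hy.1)).mpr (this ▸ Submodule.neg_mem _ ((mset_max hy.1).mp hy))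

theorem mset_sub {y z : E'} (hy : y ∈ mset B) (hz : z ∈ mset B) : y - z ∈ mset B := by
  rw [sub_eq_add_neg]; exact mset_add hy (mset_neg hz)

theorem mset_mul {y z : E'} (hy : y ∈ mset B) (hz : z ∈ B) : y * z ∈ mset B := by
  have : (⟨y * z, mul_mem hy.1 hz⟩ : B) = ⟨y, hy.1⟩ * ⟨z, hz⟩ := rfl
  exact (mset_max (mul_mem hy.1 hz)).mpr
    (this ▸ Ideal.mul_mem_right _ _ ((mset_max hy.1).mp hy))

theorem mset_mul_left {y z : E'} (hy : y ∈ mset B) (hz : z ∈ B) : z * y ∈ mset B := by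
  rw [mul_comm]; exact mset_mul hy hz

theorem isUnit_of_inv_mem {y : E'} (hy : y ∈ B) (hy0 : y ≠ 0) (hyi : y⁻¹ ∈ B) :
    IsUnit (⟨y, hy⟩ : B) := by
  refine isUnit_iff_exists_inv.mpr ⟨⟨y⁻¹, hyi⟩, ?_⟩
  exact Subtype.ext (mul_inv_cancel₀ hy0)

theorem inv_mem_of_isUnit {y : E'} (hy : y ∈ B) (hu : IsUnit (⟨y, hy⟩ : B)) :
    y⁻¹ ∈ B := by
  obtain ⟨u, hu'⟩ := isUnit_iff_exists_inv.mp hu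
  have h1 : y * (u : E') = 1 := congrArg Subtype.val hu'
  rcases eq_or_ne y 0 with rfl | h0
  · simp at h1
  · have : (u : E') = y⁻¹ := by exact eq_inv_of_mul_eq_one_right h1
    exact this ▸ u.2

theorem not_mem_mset_of_unit {y : E'} (hy : y ∈ B) (hy0 : y ≠ 0) (hyi : y⁻¹ ∈ B) :
    y ∉ mset B := by
  rintro ⟨h, hu⟩; exact hu (isUnit_of_inv_mem hy hy0 hyi)

theorem mset_prime {y z : E'} (hy : y ∈ B) (hz : z ∈ B) (h : y * z ∈ mset B) :
    y ∈ mset B ∨ z ∈ mset B := by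
  by_contra hc
  push_neg at hc
  have huy : IsUnit (⟨y, hy⟩ : B) := by
    by_contra h'; exact hc.1 (mem_mset hy h')
  have huz : IsUnit (⟨z, hz⟩ : B) := by
    by_contra h'; exact hc.2 (mem_mset hz h')
  exact h.2 (huy.mul huz)

/-! ### The polynomial ring `E[α]` and its residue map -/

theorem aeval_coe_eq {E : Subfield E'} (cE : ↥E) (p : Polynomial ↥E) :
    aeval ((cE : E')) p = ((eval cE p : ↥E) : E') := by
  rw [show ((cE : E')) = algebraMap ↥E E' cE from rfl, aeval_algebraMap_apply]
  rfl

variable (E : Subfield E') (α : E') in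
/-- The subring `E[α]` of `E'`. -/
noncomputable def Asub : Subring E' :=
  ((Polynomial.aeval α : Polynomial ↥E →ₐ[↥E] E').range).toSubring

theorem mem_Asub {E : Subfield E'} {α x : E'} :
    x ∈ Asub E α ↔ ∃ p : Polynomial ↥E, aeval α p = x :=
  Iff.rfl

variable (E : Subfield E') (α c : E')

variable (htr : Function.Injective (Polynomial.aeval α : Polynomial ↥E →ₐ[↥E] E'))

/-- The residue map on `E[α]`, sending `p(α)` to `p(c)`. -/
noncomputable def chi : ↥(Asub E α) →+* E' where
  toFun a := aeval c (Classical.choose (mem_Asub.mp a.2))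
  map_one' := by
    have h := Classical.choose_spec (mem_Asub.mp (1 : ↥(Asub E α)).2)
    have : Classical.choose (mem_Asub.mp (1 : ↥(Asub E α)).2) = 1 := by
      apply htr; simpa using h
    simp [this]
  map_mul' a b := by
    have ha := Classical.choose_spec (mem_Asub.mp a.2)
    have hb := Classical.choose_spec (mem_Asub.mp b.2)
    have hab := Classical.choose_spec (mem_Asub.mp (a*b).2)
    have : Classical.choose (mem_Asub.mp (a*b).2) =
        Classical.choose (mem_Asub.mp a.2) * Classical.choose (mem_Asub.mp b.2) := by
      apply htr; simp only [map_mul, ha, hb, hab]; rfl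
    simp [this]
  map_zero' := by
    have h := Classical.choose_spec (mem_Asub.mp (0 : ↥(Asub E α)).2)
    have : Classical.choose (mem_Asub.mp (0 : ↥(Asub E α)).2) = 0 := by
      apply htr; simpa using h
    simp [this]
  map_add' a b := by
    have ha := Classical.choose_spec (mem_Asub.mp a.2)
    have hb := Classical.choose_spec (mem_Asub.mp b.2)
    have hab := Classical.choose_spec (mem_Asub.mp (a+b).2)
    have : Classical.choose (mem_Asub.mp (a+b).2) =
        Classical.choose (mem_Asub.mp a.2) + Classical.choose (mem_Asub.mp b.2) := by
      apply htr; simp only [map_add, ha, hb, hab]; rfl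
    simp [this]

theorem chi_spec (p : Polynomial ↥E) (h : aeval α p ∈ Asub E α) :
    chi E α c htr ⟨aeval α p, h⟩ = aeval c p := by
  have hs := Classical.choose_spec (mem_Asub.mp h)
  have : Classical.choose (mem_Asub.mp h) = p := htr hs
  simp only [chi, RingHom.coe_mk, MonoidHom.coe_mk, OneHom.coe_mk, this]

/-! ### Chevalley extension: a valuation subring dominating the local ring at `α = c` -/

theorem exists_B (chi : ↥(Asub E α) →+* E') :
    ∃ B : ValuationSubring E', ∃ hAB : Asub E α ≤ B.toSubring,
      ∀ (x : E') (hx : x ∈ Asub E α),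
        (IsUnit (⟨x, hAB hx⟩ : B) ↔ chi ⟨x, hx⟩ ≠ 0) := by
  classical
  letI M : Ideal ↥(Asub E α) := RingHom.ker chi
  haveI : M.IsPrime := RingHom.ker_isPrime chi
  obtain ⟨B, hle, hloc⟩ :=
    (LocalSubring.ofPrime (Asub E α) M).exists_le_valuationSubring
  have hAB : Asub E α ≤ B.toSubring := (LocalSubring.le_ofPrime _ M).trans hle
  refine ⟨B, hAB, fun x hx => ?_⟩
  have key : IsUnit ((algebraMap ↥(Asub E α)
      ↥(LocalSubring.ofPrime (Asub E α) M).toSubring) ⟨x, hx⟩) ↔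
      (⟨x, hx⟩ : ↥(Asub E α)) ∈ M.primeCompl :=
    IsLocalization.AtPrime.isUnit_to_map_iff _ M ⟨x, hx⟩
  have hcompl : ((⟨x, hx⟩ : ↥(Asub E α)) ∈ M.primeCompl) ↔ chi ⟨x, hx⟩ ≠ 0 := by
    simp [M, Ideal.primeCompl, RingHom.mem_ker]
  rw [← hcompl, ← key]
  constructor
  · intro h
    exact hloc.1 _ (by convert h using 1 <;> rfl)
  · intro h
    have := h.map (Subring.inclusion hle)
    convert this using 1 <;> rfl

include htr in
theorem exists_B' :
    ∃ B : ValuationSubring E',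
      ((E : Set E') ⊆ ↑B) ∧
      (∀ p : Polynomial ↥E, aeval α p ∈ B) ∧
      (∀ p : Polynomial ↥E, aeval c p ≠ 0 → aeval α p ∈ B ∧ (aeval α p)⁻¹ ∈ B) ∧
      (∀ p : Polynomial ↥E, aeval c p = 0 → aeval α p ∈ mset B) := by
  obtain ⟨B, hAB, hiff⟩ := exists_B E α (chi E α c htr)
  have hAall : ∀ p : Polynomial ↥E, aeval α p ∈ B := fun p => hAB ⟨p, rfl⟩
  refine ⟨B, ?_, hAall, ?_, ?_⟩
  · intro e he
    have : aeval α (Polynomial.C (⟨e, he⟩ : ↥E)) = e := by rw [aeval_C]; rfl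
    exact this ▸ hAall _
  · intro p hp
    have hx : aeval α p ∈ Asub E α := ⟨p, rfl⟩
    have hu := (hiff _ hx).mpr (by rw [chi_spec E α c htr p hx]; exact hp)
    exact ⟨hAB hx, inv_mem_of_isUnit (hAB hx) hu⟩
  · intro p hp
    have hx : aeval α p ∈ Asub E α := ⟨p, rfl⟩
    refine mem_mset (hAB hx) fun hu => ?_
    exact ((hiff _ hx).mp hu) (by rw [chi_spec E α c htr p hx]; exact hp)

end ERP

namespace ERP

open Polynomial

variable {E' : Type*} [Field E']

/-! ### The rational function field `E(α)` -/

set_option maxHeartbeats 1000000 in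
/-- The subfield of quotients `p(α)/q(α)`. -/
def Frep (E : Subfield E') (α : E') : Subfield E' where
  carrier := {x | ∃ p q : Polynomial ↥E, aeval α q ≠ 0 ∧ x * aeval α q = aeval α p}
  one_mem' := ⟨1, 1, by simp⟩
  mul_mem' := by
    rintro x y ⟨p₁, q₁, hq₁, h₁⟩ ⟨p₂, q₂, hq₂, h₂⟩
    refine ⟨p₁ * p₂, q₁ * q₂, by simp [hq₁, hq₂], ?_⟩
    rw [map_mul, map_mul]
    calc x * y * (aeval α q₁ * aeval α q₂) = (x * aeval α q₁) * (y * aeval α q₂) := by ring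
    _ = aeval α p₁ * aeval α p₂ := by rw [h₁, h₂]
  add_mem' := by
    rintro x y ⟨p₁, q₁, hq₁, h₁⟩ ⟨p₂, q₂, hq₂, h₂⟩
    refine ⟨p₁ * q₂ + p₂ * q₁, q₁ * q₂, by simp [hq₁, hq₂], ?_⟩
    rw [map_add, map_mul, map_mul, map_mul]
    calc (x + y) * (aeval α q₁ * aeval α q₂)
        = (x * aeval α q₁) * aeval α q₂ + (y * aeval α q₂) * aeval α q₁ := by ring
    _ = _ := by rw [h₁, h₂]
  zero_mem' := ⟨0, 1, by simp⟩
  neg_mem' := by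
    rintro x ⟨p, q, hq, h⟩
    exact ⟨-p, q, hq, by rw [map_neg, ← h, neg_mul]⟩
  inv_mem' := by
    rintro x ⟨p, q, hq, h⟩
    rcases eq_or_ne x 0 with rfl | hx
    · exact ⟨0, 1, by simp⟩
    · have hp : aeval α p ≠ 0 := by
        rw [← h]; exact mul_ne_zero hx hq
      refine ⟨q, p, hp, ?_⟩
      rw [← h]
      field_simp

theorem mem_Frep {E : Subfield E'} {α x : E'} :
    x ∈ Frep E α ↔ ∃ p q : Polynomial ↥E, aeval α q ≠ 0 ∧ x * aeval α q = aeval α p :=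
  Iff.rfl

theorem closure_le_Frep (E : Subfield E') (α : E') :
    Subfield.closure ((E : Set E') ∪ {α}) ≤ Frep E α := by
  apply Subfield.closure_le.mpr
  rintro x (hx | hx)
  · exact mem_Frep.mpr ⟨Polynomial.C ⟨x, hx⟩, 1, by simp, by simp; rfl⟩
  · rw [Set.mem_singleton_iff] at hx
    subst hx
    exact mem_Frep.mpr ⟨X, 1, by simp, by simp⟩

/-! ### Roots over algebraically closed subfields -/

theorem mem_of_root {E : Subfield E'} (hE : IsAlgClosed ↥E) (p : Polynomial ↥E)
    (hp : p ≠ 0) (r : E') (hr : aeval r p = 0) : r ∈ E := by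
  have hint : IsIntegral ↥E r := (isAlgebraic_iff_isIntegral).mp ⟨p, hp, hr⟩
  have hdeg : (minpoly ↥E r).degree = 1 :=
    IsAlgClosed.degree_eq_one_of_irreducible ↥E (minpoly.irreducible hint)
  obtain ⟨a, ha⟩ := minpoly.mem_range_of_degree_eq_one ↥E r hdeg
  have : r = ↑a := ha.symm
  rw [this]; exact a.2

theorem aeval_mem_B {E : Subfield E'} {B : ValuationSubring E'} (hEB : (E : Set E') ⊆ B)
    (p : Polynomial ↥E) {x : E'} (hx : x ∈ B) : aeval x p ∈ B := by
  rw [aeval_eq_sum_range]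
  refine Subring.sum_mem _ fun i _ => ?_
  exact Subring.mul_mem _ (hEB (p.coeff i).2) (Subring.pow_mem _ hx i)

theorem roots_step {E : Subfield E'} {B : ValuationSubring E'}
    (hE : IsAlgClosed ↥E) (hEB : (E : Set E') ⊆ B) :
    ∀ (n : ℕ) (p : Polynomial ↥E), p.natDegree ≤ n → p ≠ 0 → ∀ x ∈ B,
      aeval x p ∈ mset B → ∃ e ∈ E, x - e ∈ mset B := by
  intro n
  induction n with
  | zero =>
    intro p hdeg hp x hx hm
    exfalso
    have hpc := eq_C_of_natDegree_eq_zero (le_antisymm hdeg (Nat.zero_le _))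
    set a := p.coeff 0 with ha'
    have ha : a ≠ 0 := fun h => hp (by rw [hpc, h, map_zero])
    have hav : aeval x p = (a : E') := by rw [hpc, aeval_C]; rfl
    rw [hav] at hm
    obtain ⟨h, hu⟩ := hm
    exact hu (isUnit_of_inv_mem h (by exact_mod_cast ha) (hEB (a⁻¹).2))
  | succ n ih =>
    intro p hdeg hp x hx hm
    rcases Nat.lt_or_ge p.natDegree (n+1) with h | h
    · exact ih p (Nat.lt_succ_iff.mp h) hp x hx hm
    · have hdeg' : p.natDegree = n + 1 := le_antisymm hdeg h
      haveI := hE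
      have hdd : p.degree ≠ 0 := by
        rw [degree_eq_natDegree hp, hdeg']; exact_mod_cast Nat.succ_ne_zero n
      obtain ⟨r, hr⟩ := IsAlgClosed.exists_root p hdd
      rw [IsRoot] at hr
      have hfac : (X - Polynomial.C r) * (p /ₘ (X - Polynomial.C r)) = p :=
        (mul_divByMonic_eq_iff_isRoot).mpr hr
      set q := p /ₘ (X - Polynomial.C r) with hq
      have hq0 : q ≠ 0 := by
        intro h0; rw [h0, mul_zero] at hfac; exact hp hfac.symm
      have hqdeg : q.natDegree ≤ n := by
        rw [hq, natDegree_divByMonic p (monic_X_sub_C r), hdeg']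
        simp
      have heval : (x - ↑r) * aeval x q ∈ mset B := by
        have : aeval x p = (x - ↑r) * aeval x q := by
          rw [← hfac, map_mul, map_sub, aeval_X, aeval_C]; rfl
        rwa [this] at hm
      rcases mset_prime (Subring.sub_mem _ hx (hEB r.2)) (aeval_mem_B hEB q hx) heval with h1 | h1
      · exact ⟨r, r.2, h1⟩
      · exact ih q hqdeg hq0 x hx h1

/-! ### Minimal-valuation coefficient -/

theorem exists_min {B : ValuationSubring E'} (t : Finset E') :
    (∀ y ∈ t, y ≠ 0) → t.Nonempty → ∃ j ∈ t, ∀ i ∈ t, i / j ∈ B := by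
  classical
  induction t using Finset.induction_on with
  | empty => exact fun _ ht => absurd ht (by simp)
  | @insert a t ha ih =>
    intro h0 _
    have ha0 : a ≠ 0 := h0 a (Finset.mem_insert_self a t)
    rcases t.eq_empty_or_nonempty with rfl | htne
    · refine ⟨a, Finset.mem_insert_self a _, fun i hi => ?_⟩
      rcases Finset.mem_insert.mp hi with rfl | h
      · rw [div_self ha0]; exact one_mem B
      · simp at h
    · obtain ⟨j, hjt, hj⟩ := ih (fun y hy => h0 y (Finset.mem_insert_of_mem hy)) htne
      have hj0 : j ≠ 0 := h0 j (Finset.mem_insert_of_mem hjt)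
      rcases B.mem_or_inv_mem (a / j) with h | h
      · refine ⟨j, Finset.mem_insert_of_mem hjt, fun i hi => ?_⟩
        rcases Finset.mem_insert.mp hi with rfl | hit
        · exact h
        · exact hj i hit
      · rw [inv_div] at h
        refine ⟨a, Finset.mem_insert_self a _, fun i hi => ?_⟩
        rcases Finset.mem_insert.mp hi with rfl | hit
        · rw [div_self ha0]; exact one_mem B
        · have heq : i / a = (i / j) * (j / a) := by field_simp
          rw [heq]
          exact mul_mem (hj i hit) h

end ERP

namespace ERP

open Polynomial

variable {E' : Type*} [Field E']

theorem resf (E : Subfield E') (α c : E') (hc : c ∈ E) {B : ValuationSubring E'}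
    (hEB : (E : Set E') ⊆ B)
    (htr' : ∀ p : Polynomial ↥E, p ≠ 0 → aeval α p ≠ 0)
    (hU : ∀ p : Polynomial ↥E, aeval c p ≠ 0 → aeval α p ∈ B ∧ (aeval α p)⁻¹ ∈ B)
    (hN : ∀ p : Polynomial ↥E, aeval c p = 0 → aeval α p ∈ mset B)
    (y : E') (hyF : y ∈ Frep E α) (hyB : y ∈ B) :
    ∃ e ∈ E, y - e ∈ mset B := by
  obtain ⟨p, q, hq, h⟩ := mem_Frep.mp hyF
  rcases eq_or_ne y 0 with rfl | hy0
  · exact ⟨0, zero_mem E, by simpa using zero_mem_mset⟩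
  have hp : aeval α p ≠ 0 := by rw [← h]; exact mul_ne_zero hy0 hq
  have hp0 : p ≠ 0 := fun h0 => hp (by rw [h0, map_zero])
  have hq0 : q ≠ 0 := fun h0 => hq (by rw [h0, map_zero])
  set cE : ↥E := ⟨c, hc⟩ with hcE
  set k := rootMultiplicity cE p with hk
  set l := rootMultiplicity cE q with hl
  set p₁ := p /ₘ (X - Polynomial.C cE) ^ k with hp₁def
  set q₁ := q /ₘ (X - Polynomial.C cE) ^ l with hq₁def
  have hpfac : (X - Polynomial.C cE) ^ k * p₁ = p := pow_mul_divByMonic_rootMultiplicity_eq p cE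
  have hqfac : (X - Polynomial.C cE) ^ l * q₁ = q := pow_mul_divByMonic_rootMultiplicity_eq q cE
  have hp₁c : eval cE p₁ ≠ 0 := eval_divByMonic_pow_rootMultiplicity_ne_zero cE hp0
  have hq₁c : eval cE q₁ ≠ 0 := eval_divByMonic_pow_rootMultiplicity_ne_zero cE hq0
  have hp₁0 : p₁ ≠ 0 := fun h0 => hp₁c (by rw [h0]; simp)
  have hq₁0 : q₁ ≠ 0 := fun h0 => hq₁c (by rw [h0]; simp)
  set t : E' := α - c with htdef
  have htA : aeval α (X - Polynomial.C cE) = t := by rw [map_sub, aeval_X, aeval_C]; rfl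
  have htc : aeval c (X - Polynomial.C cE) = 0 := by
    rw [map_sub, aeval_X, aeval_C]
    show c - (cE : E') = 0
    simp [hcE]
  have htm : t ∈ mset B := htA ▸ hN _ htc
  have htB : t ∈ B := mset_memB htm
  have ht0 : t ≠ 0 := htA ▸ htr' _ (X_sub_C_ne_zero cE)
  set Rv := aeval α p₁ with hRvdef
  set Sv := aeval α q₁ with hSvdef
  have hRv0 : Rv ≠ 0 := htr' _ hp₁0
  have hSv0 : Sv ≠ 0 := htr' _ hq₁0
  have hcp₁ : aeval c p₁ = ((eval cE p₁ : ↥E) : E') := aeval_coe_eq cE p₁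
  have hcq₁ : aeval c q₁ = ((eval cE q₁ : ↥E) : E') := aeval_coe_eq cE q₁
  have hRU := hU p₁ (by rw [hcp₁]; exact_mod_cast hp₁c)
  have hSU := hU q₁ (by rw [hcq₁]; exact_mod_cast hq₁c)
  have hmain : y * (t ^ l * Sv) = t ^ k * Rv := by
    have h1 : aeval α p = t ^ k * Rv := by rw [← hpfac, map_mul, map_pow, htA]
    have h2 : aeval α q = t ^ l * Sv := by rw [← hqfac, map_mul, map_pow, htA]
    rw [← h1, ← h2, h]
  have hpowm : ∀ d : ℕ, 0 < d → t ^ d ∈ mset B := by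
    intro d hd
    have h1 : d - 1 + 1 = d := by omega
    rw [← h1, pow_succ]
    exact mset_mul_left (B := B) htm (Subring.pow_mem _ htB _)
  rcases lt_trichotomy k l with hkl | hkl | hkl
  · exfalso
    have hlk : t ^ l = t ^ k * t ^ (l - k) := by
      rw [← _root_.pow_add]; congr 1; omega
    have heq : Rv = y * Sv * t ^ (l - k) := by
      have h2 : t ^ k * (y * Sv * t ^ (l - k)) = t ^ k * Rv := by
        rw [← hmain, hlk]; ring
      exact (mul_left_cancel₀ (pow_ne_zero _ ht0) h2).symm
    have hRm : Rv ∈ mset B := by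
      rw [heq]
      exact mset_mul_left (hpowm _ (by omega)) (Subring.mul_mem _ hyB hSU.1)
    exact not_mem_mset_of_unit hRU.1 hRv0 hRU.2 hRm
  · -- k = l
    have heq : y * Sv = Rv := by
      have h2 : t ^ k * (y * Sv) = t ^ k * Rv := by
        rw [← hmain, hkl]; ring
      exact mul_left_cancel₀ (pow_ne_zero _ ht0) h2
    set a : E' := ((eval cE p₁ : ↥E) : E') with hadef
    set b : E' := ((eval cE q₁ : ↥E) : E') with hbdef
    have ha0 : a ≠ 0 := by rw [hadef]; exact_mod_cast hp₁c
    have hb0 : b ≠ 0 := by rw [hbdef]; exact_mod_cast hq₁c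
    refine ⟨a / b, div_mem (SetLike.coe_mem _) (SetLike.coe_mem _), ?_⟩
    set N : E' := Rv * b - Sv * a with hNdef
    have hNm : N ∈ mset B := by
      have hrepr : N = aeval α (p₁ * Polynomial.C (eval cE q₁) - q₁ * Polynomial.C (eval cE p₁)) := by
        rw [map_sub, map_mul, map_mul, aeval_C, aeval_C]; rfl
      rw [hrepr]
      apply hN
      rw [map_sub, map_mul, map_mul, aeval_C, aeval_C, hcp₁, hcq₁]
      show a * (b : E') - b * a = 0
      ring
    have hSbinv : (Sv * b)⁻¹ ∈ B := by
      rw [mul_inv]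
      refine Subring.mul_mem _ hSU.2 ?_
      have : b⁻¹ = (((eval cE q₁)⁻¹ : ↥E) : E') := by
        rw [hbdef]; push_cast; ring
      rw [this]; exact hEB (SetLike.coe_mem _)
    have heq2 : y - a / b = N * (Sv * b)⁻¹ := by
      rw [hNdef, ← heq]
      field_simp
    rw [heq2]
    exact mset_mul hNm hSbinv
  · -- k > l
    refine ⟨0, zero_mem E, ?_⟩
    rw [sub_zero]
    have hkl2 : t ^ k = t ^ l * t ^ (k - l) := by
      rw [← _root_.pow_add]; congr 1; omega
    have heq : y = t ^ (k - l) * Rv * Sv⁻¹ := by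
      have h2 : t ^ l * (y * Sv) = t ^ l * (t ^ (k - l) * Rv) := by
        calc t ^ l * (y * Sv) = y * (t ^ l * Sv) := by ring
        _ = t ^ k * Rv := hmain
        _ = t ^ l * (t ^ (k - l) * Rv) := by rw [hkl2]; ring
      have h3 := mul_left_cancel₀ (pow_ne_zero l ht0) h2
      rw [← h3, mul_assoc, mul_inv_cancel₀ hSv0, mul_one]
    rw [heq]
    exact mset_mul (mset_mul (hpowm _ (by omega)) hRU.1) hSU.2

theorem res_exists (E : Subfield E') (α c : E') (hc : c ∈ E) {B : ValuationSubring E'}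
    (hE : IsAlgClosed ↥E) (hEB : (E : Set E') ⊆ B)
    (hFle : Subfield.closure ((E : Set E') ∪ {α}) ≤ Frep E α)
    (htr' : ∀ p : Polynomial ↥E, p ≠ 0 → aeval α p ≠ 0)
    (hU : ∀ p : Polynomial ↥E, aeval c p ≠ 0 → aeval α p ∈ B ∧ (aeval α p)⁻¹ ∈ B)
    (hN : ∀ p : Polynomial ↥E, aeval c p = 0 → aeval α p ∈ mset B)
    (halg : ∀ x : E', IsAlgebraic ↥(Subfield.closure ((E : Set E') ∪ {α})) x)
    (x : E') (hx : x ∈ B) : ∃ e ∈ E, x - e ∈ mset B := by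
  classical
  set F₀ := Subfield.closure ((E : Set E') ∪ {α}) with hF₀
  obtain ⟨p, hp0, hpx⟩ := halg x
  set P : Polynomial E' := p.map (F₀.subtype) with hPdef
  have hP0 : P ≠ 0 := by
    intro h0
    exact hp0 (Polynomial.map_injective (F₀.subtype) Subtype.val_injective
      (by rw [Polynomial.map_zero]; exact h0))
  have hPco : ∀ i, P.coeff i ∈ F₀ := by
    intro i; rw [hPdef, coeff_map]; exact (p.coeff i).2
  have hPx : P.eval x = 0 := by
    rw [hPdef, eval_map]
    exact hpx
  have hsupp : P.support.Nonempty := Polynomial.support_nonempty.mpr hP0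
  set tset := P.support.image (fun i => P.coeff i) with htset
  obtain ⟨bj, hbjt, hmin⟩ := exists_min (B := B) tset
    (by rintro y hy
        obtain ⟨i, hi, rfl⟩ := Finset.mem_image.mp hy
        exact mem_support_iff.mp hi)
    (hsupp.image _)
  obtain ⟨j, hjsupp, hbj⟩ := Finset.mem_image.mp hbjt
  have hbj0 : bj ≠ 0 := by rw [← hbj]; exact mem_support_iff.mp hjsupp
  have hdiv : ∀ i ∈ P.support, P.coeff i / bj ∈ B := fun i hi =>
    hmin _ (Finset.mem_image_of_mem _ hi)
  have hdivF : ∀ i, P.coeff i / bj ∈ Frep E α := fun i =>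
    div_mem (hFle (hPco i)) (hFle (hbj ▸ hPco j))
  -- choose residues for the normalized coefficients
  have hch : ∀ i : ℕ, ∃ e : E', i ∈ P.support → e ∈ E ∧ P.coeff i / bj - e ∈ mset B := by
    intro i
    by_cases hi : i ∈ P.support
    · obtain ⟨e, he, hm⟩ := resf E α c hc hEB htr' hU hN _ (hdivF i) (hdiv i hi)
      exact ⟨e, fun _ => ⟨he, hm⟩⟩
    · exact ⟨0, fun h => absurd h hi⟩
  choose ec hec using hch
  -- the reduced polynomial over E
  set g : Polynomial ↥E :=
    ∑ i ∈ P.support.attach, Polynomial.C (⟨ec i.1, (hec i.1 i.2).1⟩ : ↥E) * X ^ (i.1 : ℕ) with hgdef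
  have hgco : ∀ m ∈ P.support, (g.coeff m : E') = ec m := by
    intro m hm
    rw [hgdef, finset_sum_coeff]
    rw [Finset.sum_eq_single (⟨m, hm⟩ : {x // x ∈ P.support})]
    · simp
    · intro b _ hb
      rw [coeff_C_mul, coeff_X_pow, if_neg, mul_zero]
      exact fun h => hb (Subtype.ext h.symm)
    · intro h
      exact absurd (Finset.mem_attach _ _) h
  have hecj : ec j ≠ 0 := by
    intro h0
    have h1 := (hec j hjsupp).2
    rw [h0, sub_zero, hbj, div_self hbj0] at h1
    exact one_not_mem_mset h1
  have hg0 : g ≠ 0 := by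
    intro h0
    apply hecj
    have := hgco j hjsupp
    rw [h0] at this
    simpa using this.symm
  -- the sum of residues differs from 0 by an element of mset
  have hS : ∑ i ∈ P.support.attach, (P.coeff i.1 / bj - ec i.1) * x ^ (i.1 : ℕ) ∈ mset B := by
    apply Finset.sum_induction _ (fun y => y ∈ mset B) (fun _ _ => mset_add) zero_mem_mset
    intro i _
    exact mset_mul (hec i.1 i.2).2 (Subring.pow_mem _ hx _)
  have hsum0 : ∑ i ∈ P.support.attach, (P.coeff i.1 / bj) * x ^ (i.1 : ℕ) = 0 := by
    rw [Finset.sum_attach P.support (fun i => (P.coeff i / bj) * x ^ i)]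
    have : ∑ i ∈ P.support, P.coeff i / bj * x ^ i
        = bj⁻¹ * ∑ i ∈ P.support, P.coeff i * x ^ i := by
      rw [Finset.mul_sum]
      refine Finset.sum_congr rfl fun i _ => ?_
      field_simp
    have hev : P.eval x = ∑ i ∈ P.support, P.coeff i * x ^ i := by
      rw [eval_eq_sum, sum_def]
    rw [this, ← hev, hPx, mul_zero]
  have haev : aeval x g ∈ mset B := by
    have h1 : aeval x g = ∑ i ∈ P.support.attach, (ec i.1) * x ^ (i.1 : ℕ) := by
      rw [hgdef, map_sum]
      refine Finset.sum_congr rfl fun i _ => ?_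
      rw [map_mul, aeval_C, map_pow, aeval_X]
      rfl
    have h2 : aeval x g = (∑ i ∈ P.support.attach, (P.coeff i.1 / bj) * x ^ (i.1 : ℕ)) -
        ∑ i ∈ P.support.attach, (P.coeff i.1 / bj - ec i.1) * x ^ (i.1 : ℕ) := by
      rw [h1, ← Finset.sum_sub_distrib]
      exact Finset.sum_congr rfl fun i _ => by ring
    rw [h2, hsum0, zero_sub]
    exact mset_neg hS
  exact roots_step hE hEB g.natDegree g le_rfl hg0 x hx haev

theorem gen_poly (E : Subfield E') (α : E')
    (hFle : Subfield.closure ((E : Set E') ∪ {α}) ≤ Frep E α)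
    (htr' : ∀ p : Polynomial ↥E, p ≠ 0 → aeval α p ≠ 0)
    (x : E') (halgx : IsAlgebraic ↥(Subfield.closure ((E : Set E') ∪ {α})) x) :
    ∃ w : Polynomial ↥E, w ≠ 0 ∧
      ∀ (B : ValuationSubring E') (c : E'),
        (∀ p : Polynomial ↥E, aeval c p ≠ 0 → aeval α p ∈ B ∧ (aeval α p)⁻¹ ∈ B) →
        (∀ p : Polynomial ↥E, aeval α p ∈ B) →
        aeval c w ≠ 0 → x ∈ B := by
  classical
  set F₀ := Subfield.closure ((E : Set E') ∪ {α}) with hF₀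
  obtain ⟨p, hp0, hpx⟩ := halgx
  set P : Polynomial E' := p.map (F₀.subtype) with hPdef
  have hP0 : P ≠ 0 := fun h0 => hp0 (Polynomial.map_injective (F₀.subtype) Subtype.val_injective
      (by rw [Polynomial.map_zero]; exact h0))
  have hPco : ∀ i, P.coeff i ∈ F₀ := fun i => by rw [hPdef, coeff_map]; exact (p.coeff i).2
  have hPx : P.eval x = 0 := by rw [hPdef, eval_map]; exact hpx
  set n := P.natDegree with hn
  have hnsupp : n ∈ P.support := natDegree_mem_support_of_nonzero hP0
  -- choose representations of the coefficients
  have hrep : ∀ i : ℕ, ∃ pq : Polynomial ↥E × Polynomial ↥E,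
      aeval α pq.2 ≠ 0 ∧ P.coeff i * aeval α pq.2 = aeval α pq.1 := by
    intro i
    obtain ⟨pi, qi, h1, h2⟩ := mem_Frep.mp (hFle (hPco i))
    exact ⟨(pi, qi), h1, h2⟩
  choose pq hq hpq using hrep
  -- u i : the cleared-denominator numerators
  set u : ℕ → Polynomial ↥E :=
    fun i => (pq i).1 * ∏ i' ∈ P.support.erase i, (pq i').2 with hu
  set D : E' := aeval α (∏ i' ∈ P.support, (pq i').2) with hD
  have hD0 : D ≠ 0 := by
    rw [hD, map_prod]
    exact Finset.prod_ne_zero_iff.mpr fun i _ => hq i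
  have hbu : ∀ i ∈ P.support, P.coeff i * D = aeval α (u i) := by
    intro i hi
    rw [hD, hu]
    have : ∏ i' ∈ P.support, (pq i').2 = (pq i).2 * ∏ i' ∈ P.support.erase i, (pq i').2 :=
      (Finset.mul_prod_erase _ _ hi).symm
    rw [this, map_mul, map_mul, map_prod, ← mul_assoc, hpq i]
  have hun0 : u n ≠ 0 := by
    intro h0
    have h1 := hbu n hnsupp
    rw [h0, map_zero] at h1
    exact (mul_ne_zero (mem_support_iff.mp hnsupp) hD0) h1
  refine ⟨u n, hun0, ?_⟩
  intro B c hU hAB hw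
  by_contra hxB
  have hx0 : x ≠ 0 := fun h0 => hxB (h0 ▸ zero_mem B)
  have hxi : x⁻¹ ∈ B := (B.mem_or_inv_mem x).resolve_left hxB
  have hxim : x⁻¹ ∈ mset B := by
    refine mem_mset hxi fun hu' => hxB ?_
    have := inv_mem_of_isUnit hxi hu'
    rwa [inv_inv] at this
  obtain ⟨hBn, hBni⟩ := hU (u n) hw
  have hbn0 : aeval α (u n) ≠ 0 := htr' _ hun0
  -- the relation ∑ i ∈ supp, (coeff i * D) x^i = 0
  have hrel : ∑ i ∈ P.support, (P.coeff i * D) * x ^ i = 0 := by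
    have hev : P.eval x = ∑ i ∈ P.support, P.coeff i * x ^ i := by
      rw [eval_eq_sum, sum_def]
    calc ∑ i ∈ P.support, (P.coeff i * D) * x ^ i
        = (∑ i ∈ P.support, P.coeff i * x ^ i) * D := by
          rw [Finset.sum_mul]; exact Finset.sum_congr rfl fun i _ => by ring
    _ = 0 := by rw [← hev, hPx, zero_mul]
  -- multiply by x⁻¹ ^ n
  have hkey : aeval α (u n) = -∑ i ∈ P.support.erase n, aeval α (u i) * (x⁻¹) ^ (n - i) := by
    have h1 : ∑ i ∈ P.support, (P.coeff i * D) * x ^ i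
        = (P.coeff n * D) * x ^ n + ∑ i ∈ P.support.erase n, (P.coeff i * D) * x ^ i :=
      (Finset.add_sum_erase _ _ hnsupp).symm
    have h2 : (P.coeff n * D) * x ^ n = -∑ i ∈ P.support.erase n, (P.coeff i * D) * x ^ i := by
      rw [eq_neg_iff_add_eq_zero, ← h1, hrel]
    have h3 : aeval α (u n) = ((P.coeff n * D) * x ^ n) * (x⁻¹) ^ n := by
      rw [← hbu n hnsupp, mul_assoc, ← mul_pow, mul_inv_cancel₀ hx0, one_pow, mul_one]
    rw [h3, h2, neg_mul, Finset.sum_mul]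
    congr 1
    refine Finset.sum_congr rfl fun i hi => ?_
    have hin : i < n := lt_of_le_of_ne (le_natDegree_of_mem_supp i (Finset.mem_of_mem_erase hi))
      (Finset.ne_of_mem_erase hi)
    rw [hbu i (Finset.mem_of_mem_erase hi)]
    have : (x⁻¹ : E') ^ n = (x⁻¹) ^ i * (x⁻¹) ^ (n - i) := by
      rw [← _root_.pow_add]; congr 1; omega
    rw [this, mul_assoc, ← mul_assoc (x ^ i), ← mul_pow, mul_inv_cancel₀ hx0, one_pow, one_mul]
  -- hence aeval α (u n) ∈ mset B, contradiction with it being a unit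
  have hmem : aeval α (u n) ∈ mset B := by
    rw [hkey]
    refine mset_neg ?_
    refine Finset.sum_induction _ (fun y => y ∈ mset B) (fun _ _ => mset_add) zero_mem_mset
      (fun i hi => ?_)
    have hin : i < n := lt_of_le_of_ne (le_natDegree_of_mem_supp i (Finset.mem_of_mem_erase hi))
      (Finset.ne_of_mem_erase hi)
    have hpow : (x⁻¹ : E') ^ (n - i) = x⁻¹ * (x⁻¹) ^ (n - i - 1) := by
      rw [← pow_succ']; congr 1; omega
    rw [mul_comm, hpow, mul_assoc]
    exact mset_mul hxim (Subring.mul_mem _ (Subring.pow_mem _ hxi _) (hAB _))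
  exact not_mem_mset_of_unit hBn hbn0 hBni hmem

end ERP

/-- Consider a tower of fields `K ⊆ E ⊆ E'` where `K` is infinite and `E'/E` is an
extension of algebraically closed fields with transcendence basis `{α}`.  If `R` is a
subring of `E'` finitely generated over `E`, then there is an `E`-rational place `P` of
`E'` sending `α` and `α⁻¹` into `K` and finite on `R`. -/
theorem exists_rational_place
    (E' : Type*) [Field E'] (K E : Subfield E') (hKE : K ≤ E)
    (hKinf : (K : Set E').Infinite)
    (hE : IsAlgClosed E) (hE' : IsAlgClosed E')
    (α : E') (hα : IsSingleTransBasis E ⊤ α)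
    (R : Subring E')
    (hR : ∃ s : Finset E', R = Subring.closure ((E : Set E') ∪ ↑s)) :
    ∃ P : RatPlace (E : Set E') (Set.univ : Set E'),
      α ∈ P.dom ∧ α⁻¹ ∈ P.dom ∧ P.res α ∈ K ∧ P.res α⁻¹ ∈ K ∧
      (R : Set E') ⊆ ↑P.dom := by
  
  classical
  obtain ⟨hαtop, htrans, halg'⟩ := hα
  have htr : Function.Injective (Polynomial.aeval α : Polynomial ↥E →ₐ[↥E] E') :=
    transcendental_iff_injective.mp htrans
  have htr' : ∀ p : Polynomial ↥E, p ≠ 0 → Polynomial.aeval α p ≠ 0 := by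
    intro p hp h0
    exact hp (htr (h0.trans (map_zero _).symm))
  have halg : ∀ x : E', IsAlgebraic ↥(Subfield.closure ((E : Set E') ∪ {α})) x :=
    fun x => halg' x trivial
  have hFle : Subfield.closure ((E : Set E') ∪ {α}) ≤ ERP.Frep E α := ERP.closure_le_Frep E α
  obtain ⟨s, hRs⟩ := hR
  -- denominators controlling the generators
  have hgen : ∀ x : E', ∃ w : Polynomial ↥E, x ∈ (s : Set E') →
      (w ≠ 0 ∧ ∀ (B : ValuationSubring E') (c : E'),
        (∀ p : Polynomial ↥E, Polynomial.aeval c p ≠ 0 →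
            Polynomial.aeval α p ∈ B ∧ (Polynomial.aeval α p)⁻¹ ∈ B) →
        (∀ p : Polynomial ↥E, Polynomial.aeval α p ∈ B) →
        Polynomial.aeval c w ≠ 0 → x ∈ B) := by
    intro x
    by_cases hx : x ∈ (s : Set E')
    · obtain ⟨w, hw0, hwP⟩ := ERP.gen_poly E α hFle htr' x (halg x)
      exact ⟨w, fun _ => ⟨hw0, hwP⟩⟩
    · exact ⟨1, fun h => absurd h hx⟩
  choose w hw using hgen
  -- choose a good value `c ∈ K`
  set bad : Set E' := {(0:E')} ∪
    ⋃ x ∈ (s : Set E'), (fun e : ↥E => (e : E')) '' ((w x).roots.toFinset : Set ↥E)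
    with hbad
  have hbadfin : bad.Finite := by
    refine Set.Finite.union (Set.finite_singleton 0) ?_
    exact Set.Finite.biUnion s.finite_toSet fun x _ =>
      Set.Finite.image _ (Finset.finite_toSet _)
  obtain ⟨c, hcK, hcbad⟩ : ∃ c, c ∈ (K : Set E') ∧ c ∉ bad := by
    obtain ⟨c, hc⟩ := (hKinf.diff hbadfin).nonempty
    exact ⟨c, hc.1, hc.2⟩
  have hc0 : c ≠ 0 := by
    intro h0
    exact hcbad (Or.inl (by rw [h0]; exact rfl))
  have hcE : c ∈ E := hKE hcK
  have hcw : ∀ x ∈ (s : Set E'), Polynomial.aeval c (w x) ≠ 0 := by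
    intro x hx h0
    have hwx0 := (hw x hx).1
    have hcast := ERP.aeval_coe_eq (⟨c, hcE⟩ : ↥E) (w x)
    have heval : Polynomial.eval (⟨c, hcE⟩ : ↥E) (w x) = 0 := by
      have h1 : ((Polynomial.eval (⟨c, hcE⟩ : ↥E) (w x) : ↥E) : E') = 0 := by
        rw [← hcast]; exact h0
      exact_mod_cast h1
    apply hcbad
    refine Or.inr (Set.mem_biUnion hx ⟨⟨c, hcE⟩, ?_, rfl⟩)
    rw [Finset.mem_coe, Multiset.mem_toFinset, Polynomial.mem_roots hwx0]
    exact heval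
  -- the valuation subring
  obtain ⟨B, hEB, hAall, hU, hN⟩ := ERP.exists_B' E α c htr
  -- the residue map
  have hresx : ∀ x, x ∈ B → ∃ e ∈ E, x - e ∈ ERP.mset B :=
    fun x hx => ERP.res_exists E α c hcE hE hEB hFle htr' hU hN halg x hx
  have hEmset : ∀ e, e ∈ E → e ∈ ERP.mset B → e = 0 := by
    intro e he hm
    by_contra h0
    exact ERP.not_mem_mset_of_unit (hEB he) h0 (hEB (inv_mem he)) hm
  have huniq : ∀ (x e₁ e₂ : E'), e₁ ∈ E → e₂ ∈ E →
      x - e₁ ∈ ERP.mset B → x - e₂ ∈ ERP.mset B → e₁ = e₂ := by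
    intro x e₁ e₂ h1 h2 hm1 hm2
    have hsub : e₁ - e₂ = (x - e₂) - (x - e₁) := by ring
    have := hEmset _ (sub_mem h1 h2) (hsub ▸ ERP.mset_sub hm2 hm1)
    exact sub_eq_zero.mp this
  set rf : E' → E' :=
    fun x => if h : ∃ e, e ∈ E ∧ x - e ∈ ERP.mset B then h.choose else 0 with hrfdef
  have hres_eq : ∀ x e, e ∈ E → x - e ∈ ERP.mset B → rf x = e := by
    intro x e he hm
    have hex : ∃ e', e' ∈ E ∧ x - e' ∈ ERP.mset B := ⟨e, he, hm⟩
    have hspec := hex.choose_spec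
    rw [hrfdef]
    simp only [dif_pos hex]
    exact huniq x _ e hspec.1 he hspec.2 hm
  have hres_spec : ∀ x, x ∈ B → rf x ∈ E ∧ x - rf x ∈ ERP.mset B := by
    intro x hx
    obtain ⟨e, he, hm⟩ := hresx x hx
    rw [hres_eq x e he hm]
    exact ⟨he, hm⟩
  have hres_unit : ∀ x, ∀ hx : x ∈ B, rf x ≠ 0 → IsUnit (⟨x, hx⟩ : B) := by
    intro x hx h0
    by_contra hu
    have hxm : x ∈ ERP.mset B := ERP.mem_mset hx hu
    have hrm : rf x ∈ ERP.mset B := by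
      have heq : rf x = x - (x - rf x) := by ring
      rw [heq]
      exact ERP.mset_sub hxm (hres_spec x hx).2
    exact h0 (hEmset _ (hres_spec x hx).1 hrm)
  -- facts about α
  have hαB : α ∈ B := by
    have := hAall Polynomial.X
    rwa [Polynomial.aeval_X] at this
  have hαc : α - c ∈ ERP.mset B := by
    have h1 : Polynomial.aeval α (Polynomial.X - Polynomial.C (⟨c, hcE⟩ : ↥E)) = α - c := by
      rw [map_sub, Polynomial.aeval_X, Polynomial.aeval_C]; rfl
    have h2 : Polynomial.aeval c (Polynomial.X - Polynomial.C (⟨c, hcE⟩ : ↥E)) = 0 := by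
      rw [map_sub, Polynomial.aeval_X, Polynomial.aeval_C]
      show c - ((⟨c, hcE⟩ : ↥E) : E') = 0
      simp
    exact h1 ▸ hN _ h2
  have hresα : rf α = c := hres_eq α c hcE hαc
  have hαunit : IsUnit (⟨α, hαB⟩ : B) := hres_unit α hαB (by rw [hresα]; exact hc0)
  have hαinv : α⁻¹ ∈ B := ERP.inv_mem_of_isUnit hαB hαunit
  have hα0 : α ≠ 0 := by
    intro h0
    exact htr' Polynomial.X Polynomial.X_ne_zero (by rw [Polynomial.aeval_X]; exact h0)
  have hαinvres : rf α⁻¹ = c⁻¹ := by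
    apply hres_eq _ _ (inv_mem hcE)
    have heq : α⁻¹ - c⁻¹ = (-(α - c)) * (α⁻¹ * c⁻¹) := by
      field_simp
      ring
    rw [heq]
    exact ERP.mset_mul (ERP.mset_neg hαc) (Subring.mul_mem _ hαinv (hEB (inv_mem hcE)))
  refine ⟨{ dom := B.toSubring
            dom_le := fun x _ => trivial
            res := rf
            res_one := hres_eq 1 1 (one_mem E) (by rw [sub_self]; exact ERP.zero_mem_mset)
            res_add := fun x hx y hy => hres_eq _ _
              (add_mem (hres_spec x hx).1 (hres_spec y hy).1)
              (by
                have h1 := ERP.mset_add (hres_spec x hx).2 (hres_spec y hy).2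
                have heq : (x + y) - (rf x + rf y) = (x - rf x) + (y - rf y) := by ring
                rw [heq]; exact h1)
            res_mul := fun x hx y hy => hres_eq _ _
              (mul_mem (hres_spec x hx).1 (hres_spec y hy).1)
              (by
                have heq : x * y - rf x * rf y = (x - rf x) * y + rf x * (y - rf y) := by
                  ring
                rw [heq]
                exact ERP.mset_add (ERP.mset_mul (hres_spec x hx).2 hy)
                  (ERP.mset_mul_left (hres_spec y hy).2 (hEB (hres_spec x hx).1)))
            res_mem := fun x hx => (hres_spec x hx).1
            base_subset := hEB
            res_id := fun x hx => hres_eq x x hx (by rw [sub_self]; exact ERP.zero_mem_mset)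
            vring := fun x _ hx => (B.mem_or_inv_mem x).resolve_left hx
            res_unit := fun x hx h0 => ERP.inv_mem_of_isUnit hx (hres_unit x hx h0)
            res_nonunit := fun x hx hx0 hxi h0 => by
              have hxu : IsUnit (⟨x, hx⟩ : B) := ERP.isUnit_of_inv_mem hx hx0 hxi
              have : x ∈ ERP.mset B := by
                have := (hres_spec x hx).2
                rwa [h0, sub_zero] at this
              exact this.2 hxu },
    hαB, hαinv, ?_, ?_, ?_⟩
  · show rf α ∈ K
    rw [hresα]; exact hcK
  · show rf α⁻¹ ∈ K
    rw [hαinvres]; exact inv_mem hcK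
  · rw [hRs]
    have hle : Subring.closure ((E : Set E') ∪ ↑s) ≤ B.toSubring := by
      apply Subring.closure_le.mpr
      apply Set.union_subset hEB
      intro x hx
      exact (hw x hx).2 B c hU hAall (hcw x hx)
    exact fun x hx => hle hx
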